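/- arXiv:2003.00001 — 5 statements merged into one kernel-verified Lean document; each statement's English description precedes it below -/
import Mathlib

section
/- If X_z is negative binomial with parameters (z, p) (number of failures before the z-th success, failure probability q = 1 - p with 0 < q < 1/2), and for k ≤ z the catch-up probability from deficit z - k is (q/p)^{z-k}, then the total double spend success probability P(z) = P[X_z > z] + ∑_{k=0}^{z} P[X_z = k] (q/p)^{z-k} equals I_{4pq}(z, 1/2), the regularized incomplete beta function evaluated at 4pq with parameters (z, 1/2). -/
open Real

/-- The regularized incomplete beta function
`I_x(a,b) = Γ(a+b)/(Γ(a)Γ(b)) ∫_0^x t^(a-1) (1-t)^(b-1) dt`. -/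
noncomputable def regIncBeta (x a b : ℝ) : ℝ :=
  Real.Gamma (a + b) / (Real.Gamma a * Real.Gamma b)
    * ∫ t in (0:ℝ)..x, t ^ (a - 1) * (1 - t) ^ (b - 1)

open Finset


lemma nb_succ_mul (z j : ℕ) (hz : 1 ≤ z) :
    ((j + 1 + z - 1).choose (j + 1) : ℝ) * (j + 1) = (j + z) * ((j + z - 1).choose j) := by
  have h2 : (j + z - 1) + 1 = j + z := by omega
  have h3 : j + 1 + z - 1 = j + z := by omega
  have this1 := Nat.add_one_mul_choose_eq (j + z - 1) j
  rw [h2] at this1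
  have : ((j + z) * ((j + z - 1).choose j) : ℕ) = ((j + z).choose (j+1)) * (j+1) := this1
  rw [h3]
  exact_mod_cast (congrArg (Nat.cast : ℕ → ℝ) this).symm

lemma hasDerivAt_S (z : ℕ) (hz : 1 ≤ z) (x : ℝ) :
    HasDerivAt (fun x : ℝ => ∑ k ∈ range z, ((k + z - 1).choose k : ℝ) * x ^ k * (1 - x) ^ z)
      (-(((2*z-1) * ((2*z-2).choose (z-1)) : ℕ) : ℝ) * (x * (1 - x)) ^ (z - 1)) x := by
  set f : ℕ → ℝ := fun k => match k with
    | 0 => 0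
    | (j+1) => -(((j + z : ℕ)) : ℝ) * ((j + z - 1).choose j : ℝ) * x ^ j * (1 - x) ^ (z - 1)
    with hf
  have key : ∀ k ∈ range z, HasDerivAt
      (fun x : ℝ => ((k + z - 1).choose k : ℝ) * x ^ k * (1 - x) ^ z)
      (f (k+1) - f k) x := by
    intro k hk
    have hd : HasDerivAt (fun x : ℝ => ((k + z - 1).choose k : ℝ) * x ^ k * (1 - x) ^ z)
        (((k + z - 1).choose k : ℝ) * (k * x ^ (k-1)) * (1 - x) ^ z
          + ((k + z - 1).choose k : ℝ) * x ^ k * (z * (1 - x) ^ (z-1) * (-1))) x := by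
      exact (((hasDerivAt_pow k x).const_mul _).mul
        (((hasDerivAt_id x).const_sub 1).pow z))
    convert hd using 1
    obtain ⟨w, hw⟩ : ∃ w, z = w + 1 := ⟨z - 1, by omega⟩
    cases k with
    | zero =>
        simp only [hf]
        simp [hw]
        ring
    | succ j =>
        simp only [hf, Nat.add_sub_cancel]
        have hcast := nb_succ_mul z j hz
        have hz1 : (1 - x) ^ z = (1 - x) * (1 - x) ^ (z - 1) := by
          rw [hw]; simp [pow_succ]; ring
        have hjj : j + 1 + z - 1 = j + z := by omega
        rw [hjj] at hcast ⊢
        rw [hz1]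
        push_cast at hcast ⊢
        linear_combination (-(x^j * (1-x)^(z-1))) * hcast
  have hsum := HasDerivAt.fun_sum key
  have htel : ∑ k ∈ range z, (f (k+1) - f k) = f z - f 0 := Finset.sum_range_sub f z
  rw [htel] at hsum
  obtain ⟨w, hw⟩ : ∃ w, z = w + 1 := ⟨z - 1, by omega⟩
  refine hsum.congr_deriv (Eq.symm ?_)
  subst hw
  have e1 : (2*(w+1)-1:ℕ) = w+(w+1) := by omega
  have e2 : (2*(w+1)-2:ℕ) = w+(w+1)-1 := by omega
  rw [e1, e2]
  simp only [hf, Nat.add_sub_cancel]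
  push_cast
  rw [mul_pow]
  ring
noncomputable def Sz (z : ℕ) (x : ℝ) : ℝ :=
  ∑ k ∈ range z, ((k + z - 1).choose k : ℝ) * x ^ k * (1 - x) ^ z

lemma F_eq_integral (z : ℕ) (hz : 1 ≤ z) (q : ℝ) :
    1 - Sz z q + Sz z (1 - q)
      = 2 * (((2*z-1) * ((2*z-2).choose (z-1)) : ℕ) : ℝ)
        * ∫ u in (0:ℝ)..q, (u * (1 - u)) ^ (z - 1) := by
  set A : ℝ := (((2*z-1) * ((2*z-2).choose (z-1)) : ℕ) : ℝ) with hA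
  have hF : ∀ x : ℝ, HasDerivAt (fun x => 1 - Sz z x + Sz z (1 - x))
      (2 * A * (x * (1 - x)) ^ (z - 1)) x := by
    intro x
    have h1 := hasDerivAt_S z hz x
    have h2 : HasDerivAt (fun x : ℝ => Sz z (1 - x)) (A * (x * (1 - x)) ^ (z - 1)) x := by
      simp only [Sz]
      have hc := (hasDerivAt_S z hz (1 - x)).comp x ((hasDerivAt_id x).const_sub 1)
      refine hc.congr_deriv (Eq.symm ?_)
      have he : (1 : ℝ) - (1 - x) = x := by ring
      rw [he]; ring
    simp only [Sz]
    have hcomb := ((hasDerivAt_const x (1:ℝ)).sub h1).add h2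
    simp only [Sz] at hcomb
    refine hcomb.congr_deriv (Eq.symm ?_)
    ring
  have hint : ∫ u in (0:ℝ)..q, 2 * A * (u * (1 - u)) ^ (z - 1)
      = (1 - Sz z q + Sz z (1 - q)) - (1 - Sz z 0 + Sz z (1 - 0)) := by
    apply intervalIntegral.integral_eq_sub_of_hasDerivAt (fun u _ => hF u)
    apply Continuous.intervalIntegrable
    fun_prop
  have hS0 : Sz z 0 = 1 := by
    rw [Sz, Finset.sum_eq_single 0]
    · simp
    · intro k _ hk
      simp [zero_pow hk]
    · intro h; exact absurd (Finset.mem_range.2 (by omega)) h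
  have hS1 : Sz z 1 = 0 := by
    rw [Sz]
    apply Finset.sum_eq_zero
    intro k _
    simp [zero_pow (by omega : z ≠ 0)]
  rw [intervalIntegral.integral_const_mul] at hint
  rw [hint, hS0]
  norm_num [hS1]
lemma beta_subst (z : ℕ) (hz : 1 ≤ z) (q : ℝ) (hq0 : 0 < q) (hq1 : q < 1/2) :
    (∫ t in (0:ℝ)..(4*(1-q)*q), t ^ ((z:ℝ) - 1) * (1 - t) ^ ((1:ℝ)/2 - 1))
      = 4^z * ∫ u in (0:ℝ)..q, (u * (1 - u)) ^ (z - 1) := by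
  set g : ℝ → ℝ := fun t => t ^ ((z:ℝ) - 1) * (1 - t) ^ ((1:ℝ)/2 - 1) with hg
  set f : ℝ → ℝ := fun u => 4*u*(1-u) with hfdef
  have hlt : ∀ x ∈ Set.uIcc (0:ℝ) q, x ≤ q ∧ 0 ≤ x := by
    intro x hx
    rw [Set.uIcc_of_le hq0.le] at hx
    exact ⟨hx.2, hx.1⟩
  have hderiv : ∀ x ∈ Set.uIcc (0:ℝ) q, HasDerivAt f (4 - 8*x) x := by
    intro x _
    have h := (((hasDerivAt_id x).const_mul 4).mul ((hasDerivAt_id x).const_sub 1))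
    simp only [id] at h
    refine h.congr_deriv (Eq.symm ?_); ring
  have hcont : ContinuousOn (fun x : ℝ => 4 - 8*x) (Set.uIcc 0 q) := by fun_prop
  have himg : ∀ t ∈ f '' Set.uIcc 0 q, t < 1 := by
    rintro t ⟨x, hx, rfl⟩
    obtain ⟨hxq, hx0⟩ := hlt x hx
    have h2 : 0 < 1 - 2*x := by linarith
    have : f x = 1 - (1-2*x)^2 := by rw [hfdef]; ring
    nlinarith
  have hgcont : ContinuousOn g (f '' Set.uIcc 0 q) := by
    intro t ht
    have ht1 : t < 1 := himg t ht
    apply ContinuousAt.continuousWithinAt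
    apply ContinuousAt.mul
    · exact Real.continuousAt_rpow_const t _ (Or.inr (by push_cast; simp; exact_mod_cast hz))
    · have h1 : ContinuousAt (fun t : ℝ => (1 - t)) t := by fun_prop
      have h2 : ContinuousAt (fun y : ℝ => y ^ ((1:ℝ)/2 - 1)) (1 - t) :=
        Real.continuousAt_rpow_const _ _ (Or.inl (by linarith))
      exact h2.comp h1
  have hsub := intervalIntegral.integral_comp_smul_deriv' hderiv hcont hgcont
  have hf0 : f 0 = 0 := by simp [hfdef]
  have hfq : f q = 4*(1-q)*q := by rw [hfdef]; ring
  rw [hf0, hfq] at hsub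
  rw [← hsub]
  have hcongr : ∀ u ∈ Set.uIcc (0:ℝ) q,
      (4 - 8*u) • ((g ∘ f) u) = 4^z * (u * (1 - u)) ^ (z - 1) := by
    intro u hu
    obtain ⟨huq, hu0⟩ := hlt u hu
    have h2u : 0 < 1 - 2*u := by linarith
    have hfu0 : 0 ≤ f u := by simp only [hfdef]; nlinarith [mul_nonneg hu0 (by linarith : (0:ℝ) ≤ 1-u)]
    simp only [Function.comp, hg, smul_eq_mul]
    have e1 : (f u) ^ ((z:ℝ) - 1) = (f u) ^ (z - 1 : ℕ) := by
      rw [← Real.rpow_natCast (f u) (z-1)]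
      congr 1
      push_cast [Nat.cast_sub hz]
      ring
    have e2 : (1 - f u) ^ ((1:ℝ)/2 - 1) = (1 - 2*u)⁻¹ := by
      have h1f : 1 - f u = (1-2*u)^(2:ℕ) := by rw [hfdef]; ring
      rw [h1f, ← Real.rpow_natCast (1-2*u) 2, ← Real.rpow_mul h2u.le]
      norm_num
      exact (Real.rpow_neg_one _)
    rw [e1, e2]
    have e3 : (f u) ^ (z - 1 : ℕ) = 4^(z-1) * (u * (1-u))^(z-1) := by
      rw [hfdef, ← mul_pow]; ring_nf
    rw [e3]
    have e4 : (4:ℝ)^z = 4 * 4^(z-1) := by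
      obtain ⟨w, rfl⟩ : ∃ w, z = w + 1 := ⟨z - 1, by omega⟩
      simp [pow_succ]; ring
    rw [e4]
    have h2u' : (1 - 2*u) ≠ 0 := h2u.ne'
    field_simp
    rw [div_eq_iff (by linarith)]
    ring
  rw [intervalIntegral.integral_congr hcongr, intervalIntegral.integral_const_mul]
lemma const_eq (z : ℕ) (hz : 1 ≤ z) :
    Real.Gamma ((z:ℝ) + 1/2) / (Real.Gamma z * Real.Gamma (1/2)) * 4^z
      = 2 * (((2*z-1) * ((2*z-2).choose (z-1)) : ℕ) : ℝ) := by
  obtain ⟨w, rfl⟩ : ∃ w, z = w + 1 := ⟨z - 1, by omega⟩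
  have hGz : Real.Gamma ((w+1 : ℕ) : ℝ) = (w.factorial : ℝ) := by
    push_cast
    exact_mod_cast Real.Gamma_nat_eq_factorial w
  have hG2z : Real.Gamma (2 * ((w+1 : ℕ) : ℝ)) = ((2*w+1).factorial : ℝ) := by
    have : 2 * ((w+1 : ℕ) : ℝ) = ((2*w+1 : ℕ) : ℝ) + 1 := by push_cast; ring
    rw [this]
    exact_mod_cast Real.Gamma_nat_eq_factorial (2*w+1)
  have hdup := Real.Gamma_mul_Gamma_add_half ((w+1 : ℕ) : ℝ)
  have hGhalf : Real.Gamma (1/2) = Real.sqrt π := Real.Gamma_one_half_eq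
  have hG0 : Real.Gamma ((w+1 : ℕ) : ℝ) ≠ 0 := by
    rw [hGz]; exact_mod_cast w.factorial_ne_zero
  have hsqrt0 : Real.sqrt π ≠ 0 := by positivity
  have h4 : (4:ℝ)^(w+1) * (2:ℝ)^((1:ℝ) - 2*((w+1:ℕ):ℝ)) = 2 := by
    rw [show (4:ℝ) = 2^2 by norm_num, ← pow_mul, ← Real.rpow_natCast 2 (2*(w+1)),
      ← Real.rpow_add two_pos]
    rw [show ((2*(w+1) : ℕ) : ℝ) + (1 - 2*((w+1:ℕ):ℝ)) = 1 by push_cast; ring]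
    exact Real.rpow_one 2
  have hNat : ((2*w+1).factorial : ℝ)
      = ((2*w+1 : ℕ) : ℝ) * ((2*w).choose w : ℝ)
        * ((w.factorial : ℝ) * (w.factorial : ℝ)) := by
    have hc := Nat.choose_mul_factorial_mul_factorial (show w ≤ 2*w by omega)
    have e4 : 2*w - w = w := by omega
    rw [e4] at hc
    have hf : (2*w+1).factorial = (2*w+1) * (2*w).factorial := Nat.factorial_succ (2*w)
    rw [hf, ← hc]
    push_cast
    ring
  rw [hG2z] at hdup
  rw [hGhalf]
  rw [show 2*(w+1)-1 = 2*w+1 from by omega, show 2*(w+1)-2 = 2*w from by omega,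
    show (w+1)-1 = w from by omega]
  have hgamma : Real.Gamma (((w+1:ℕ)) + 1/2 : ℝ)
      = ((2*w+1).factorial : ℝ) * (2:ℝ)^((1:ℝ) - 2*((w+1:ℕ):ℝ)) * Real.sqrt π
        / Real.Gamma ((w+1:ℕ) : ℝ) := by
    rw [eq_div_iff hG0]
    linear_combination hdup
  push_cast at hgamma ⊢
  rw [hgamma]
  push_cast at hGz hNat h4
  rw [hGz, hNat]
  field_simp
  linear_combination (((2*w).choose w : ℕ) : ℝ) * h4
lemma tsum_part (z : ℕ) (hz : 1 ≤ z) (q : ℝ) (hq0 : 0 < q) (hq1 : q < 1/2)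
    (p : ℝ) (hp : p = 1 - q) :
    (∑' k : ℕ, if z < k then ((k + z - 1).choose k : ℝ) * p ^ z * q ^ k else 0)
      = 1 - ∑ k ∈ Finset.range (z+1), ((k + z - 1).choose k : ℝ) * p ^ z * q ^ k := by
  set f : ℕ → ℝ := fun k => ((k + z - 1).choose k : ℝ) * p ^ z * q ^ k with hfdef
  have hnq : ‖q‖ < 1 := by rw [Real.norm_eq_abs, abs_of_pos hq0]; linarith
  have hp0 : p ≠ 0 := by rw [hp]; intro h; linarith [(by linarith : (0:ℝ) < 1 - q)]
  have hsym : ∀ k, (k + z - 1).choose k = (k + (z-1)).choose (z-1) := by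
    intro k
    have h1 := Nat.choose_symm (show k ≤ k + z - 1 by omega)
    rw [show k + z - 1 - k = z - 1 from by omega] at h1
    rw [← h1]
    congr 1
    omega
  have hs : HasSum f 1 := by
    have h0 := hasSum_choose_mul_geometric_of_norm_lt_one (𝕜 := ℝ) (z-1) hnq
    rw [show z - 1 + 1 = z from by omega] at h0
    have h1 := h0.mul_left (p ^ z)
    have h2 : p ^ z * (1 / (1 - q) ^ z) = 1 := by
      rw [← hp]; field_simp
    rw [h2] at h1
    convert h1 using 2 with k
    · rfl
    rw [hfdef]
    simp only [hsym k]
    ring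
  set g : ℕ → ℝ := fun k => if z < k then f k else 0 with hgdef
  set h : ℕ → ℝ := fun k => if z < k then 0 else f k with hhdef
  have hgh : g = fun k => f k - h k := by
    funext k
    by_cases hk : z < k <;> simp [hgdef, hhdef, hk]
  have hh : Summable h := by
    apply summable_of_ne_finset_zero (s := Finset.range (z+1))
    intro b hb
    simp only [Finset.mem_range] at hb
    simp [hhdef, show z < b from by omega]
  have htsum_h : ∑' k, h k = ∑ k ∈ Finset.range (z+1), f k := by
    rw [tsum_eq_sum (s := Finset.range (z+1))]
    · apply Finset.sum_congr rfl
      intro k hk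
      simp only [Finset.mem_range] at hk
      simp [hhdef, show ¬ z < k from by omega]
    · intro b hb
      simp only [Finset.mem_range] at hb
      simp [hhdef, show z < b from by omega]
  calc ∑' k, g k = ∑' k, (f k - h k) := by rw [hgh]
    _ = ∑' k, f k - ∑' k, h k := Summable.tsum_sub hs.summable hh
    _ = 1 - ∑ k ∈ Finset.range (z+1), f k := by rw [hs.tsum_eq, htsum_h]

/-- The probability of success of a double spend after `z` confirmations:
`P[X_z > z] + ∑_{k=0}^{z} P[X_z = k] (q/p)^(z-k) = I_{4pq}(z, 1/2)`,
where `X_z` is negative binomial with parameters `(z, p)`. -/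
theorem double_spend_probability (q : ℝ) (hq0 : 0 < q) (hq1 : q < 1/2)
    (p : ℝ) (hp : p = 1 - q) (z : ℕ) (hz : 1 ≤ z) :
    (∑' k : ℕ, if z < k then ((k + z - 1).choose k : ℝ) * p ^ z * q ^ k else 0)
      + (∑ k ∈ Finset.range (z + 1),
          ((k + z - 1).choose k : ℝ) * p ^ z * q ^ k * (q / p) ^ (z - k))
      = regIncBeta (4 * p * q) z (1/2) := by
  have hp0 : (0:ℝ) < p := by rw [hp]; linarith
  rw [tsum_part z hz q hq0 hq1 p hp]
  have hterm : ∀ k ∈ Finset.range (z+1),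
      ((k + z - 1).choose k : ℝ) * p ^ z * q ^ k * (q / p) ^ (z - k)
        = ((k + z - 1).choose k : ℝ) * q ^ z * p ^ k := by
    intro k hk
    simp only [Finset.mem_range] at hk
    have e1 : p ^ z = p ^ k * p ^ (z-k) := by rw [← pow_add]; congr 1; omega
    have e2 : q ^ z = q ^ k * q ^ (z-k) := by rw [← pow_add]; congr 1; omega
    rw [div_pow, e1, e2]
    have : p ^ (z-k) ≠ 0 := pow_ne_zero _ hp0.ne'
    field_simp
  rw [Finset.sum_congr rfl hterm]
  have e1 : ∑ k ∈ Finset.range z, ((k + z - 1).choose k : ℝ) * p ^ z * q ^ k = Sz z q := by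
    rw [Sz]; apply Finset.sum_congr rfl; intro k _; rw [hp]; ring
  have e2 : ∑ k ∈ Finset.range z, ((k + z - 1).choose k : ℝ) * q ^ z * p ^ k
      = Sz z (1 - q) := by
    rw [Sz]; apply Finset.sum_congr rfl; intro k _; rw [hp]
    rw [show (1:ℝ) - (1-q) = q from by ring]; ring
  rw [Finset.sum_range_succ, Finset.sum_range_succ, e1, e2]
  have hmain : 1 - (Sz z q + ((z + z - 1).choose z : ℝ) * p ^ z * q ^ z)
      + (Sz z (1 - q) + ((z + z - 1).choose z : ℝ) * q ^ z * p ^ z)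
      = 1 - Sz z q + Sz z (1 - q) := by ring
  rw [hmain, F_eq_integral z hz q, regIncBeta]
  rw [hp, show 4 * (1-q) * q = 4*(1-q)*q from rfl]
  rw [beta_subst z hz q hq0 hq1, ← mul_assoc, const_eq z hz]
end

section
/- Let 0 < q < 1/2, p = 1 - q, s = 4pq < 1, and P(z) = I_s(z, 1/2) the regularized incomplete beta function. Then as z → ∞, P(z) ~ s^z / sqrt(π(1-s)z), i.e., the ratio P(z) · sqrt(π(1-s)z) / s^z tends to 1. -/
open Real Filter Topology

/-- Elementary inequality: `1/y - 1/x ≤ (x² - y²)/(2y³)` for `0 < y ≤ x`. -/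
lemma aux_inv_sub_le {x y : ℝ} (hy : 0 < y) (hxy : y ≤ x) :
    1 / y - 1 / x ≤ (x ^ 2 - y ^ 2) / (2 * (y ^ 2 * y)) := by
  have hx : 0 < x := hy.trans_le hxy
  rw [div_sub_div _ _ hy.ne' hx.ne', div_le_div_iff₀ (by positivity) (by positivity)]
  nlinarith [mul_nonneg (sub_nonneg.2 hxy) (sub_nonneg.2 hxy), sq_nonneg (x - y),
    mul_pos hy hx, mul_nonneg (sub_nonneg.2 hxy) (mul_pos (mul_pos hy hy) hy).le]

/-- Lower tendsto helper : `√(z - 1/2)/√z → 1`. -/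
lemma aux_sqrt_ratio :
    Tendsto (fun z : ℕ => Real.sqrt ((z : ℝ) - 1/2) / Real.sqrt z) atTop (𝓝 1) := by
  have h1 : Tendsto (fun z : ℕ => ((z : ℝ) - 1/2) / z) atTop (𝓝 1) := by
    have h2 : Tendsto (fun z : ℕ => 1 - (1/2) * (1 / (z : ℝ))) atTop (𝓝 1) := by
      have := (tendsto_one_div_atTop_nhds_zero_nat.const_mul (1/2 : ℝ)).const_sub 1
      simpa using this
    refine h2.congr' ?_
    filter_upwards [eventually_ge_atTop 1] with z hz
    have hz0 : ((z : ℕ) : ℝ) ≠ 0 := by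
      have : (1 : ℝ) ≤ (z : ℝ) := by exact_mod_cast hz
      linarith
    field_simp
  have h3 := (Real.continuous_sqrt.tendsto 1).comp h1
  simp only [Real.sqrt_one] at h3
  refine h3.congr' ?_
  filter_upwards [eventually_ge_atTop 1] with z hz
  have hz1 : (1 : ℝ) ≤ (z : ℝ) := by exact_mod_cast hz
  have h4 : (0:ℝ) ≤ (z : ℝ) - 1/2 := by linarith
  simp only [Function.comp]
  rw [Real.sqrt_div h4]

/-- Gamma-ratio asymptotics: `Γ(z + 1/2) / (Γ(z) √z) → 1`. -/
lemma aux_gamma_ratio :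
    Tendsto (fun z : ℕ => Real.Gamma ((z : ℝ) + 1/2) / (Real.Gamma z * Real.sqrt z))
      atTop (𝓝 1) := by
  refine tendsto_of_tendsto_of_tendsto_of_le_of_le' aux_sqrt_ratio tendsto_const_nhds ?_ ?_
  · -- lower bound: √(z-1/2)/√z ≤ Γ(z+1/2)/(Γ(z)√z)
    filter_upwards [eventually_ge_atTop 1] with z hz
    have hz1 : (1 : ℝ) ≤ (z : ℝ) := by exact_mod_cast hz
    have hzpos : (0 : ℝ) < z := by linarith
    have hΓ : 0 < Real.Gamma z := Real.Gamma_pos_of_pos hzpos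
    have hΓ' : 0 < Real.Gamma ((z:ℝ) - 1/2) := Real.Gamma_pos_of_pos (by linarith)
    have hΓh : 0 < Real.Gamma ((z:ℝ) + 1/2) := Real.Gamma_pos_of_pos (by linarith)
    have hsz : 0 < Real.sqrt z := Real.sqrt_pos.2 hzpos
    have hlc := Real.Gamma_mul_add_mul_le_rpow_Gamma_mul_rpow_Gamma
      (show 0 < (z:ℝ) - 1/2 by linarith) (show 0 < (z:ℝ) + 1/2 by linarith)
      (show (0:ℝ) < 1/2 by norm_num) (show (0:ℝ) < 1/2 by norm_num) (by norm_num)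
    rw [show (1/2 : ℝ) * ((z:ℝ) - 1/2) + (1/2 : ℝ) * ((z:ℝ) + 1/2) = (z : ℝ) by ring,
      ← Real.sqrt_eq_rpow, ← Real.sqrt_eq_rpow, ← Real.sqrt_mul hΓ'.le] at hlc
    have hrec : Real.Gamma ((z:ℝ) + 1/2) = ((z:ℝ) - 1/2) * Real.Gamma ((z:ℝ) - 1/2) := by
      have h := Real.Gamma_add_one (show (z:ℝ) - 1/2 ≠ 0 by intro h; nlinarith)
      rw [show (z:ℝ) - 1/2 + 1 = (z:ℝ) + 1/2 by ring] at h
      exact h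
    have hsq : Real.Gamma z ^ 2 ≤ Real.Gamma ((z:ℝ) - 1/2) * Real.Gamma ((z:ℝ) + 1/2) := by
      have h2 := Real.sq_sqrt (mul_nonneg hΓ'.le hΓh.le)
      nlinarith [Real.sqrt_nonneg (Real.Gamma ((z:ℝ) - 1/2) * Real.Gamma ((z:ℝ) + 1/2))]
    have hzz : (0:ℝ) < (z:ℝ) - 1/2 := by linarith
    have hkey : Real.Gamma z ^ 2 * ((z:ℝ) - 1/2) ≤ Real.Gamma ((z:ℝ) + 1/2) ^ 2 := by
      nlinarith [hsq, hrec]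
    have hfin : Real.Gamma z * Real.sqrt ((z:ℝ) - 1/2) ≤ Real.Gamma ((z:ℝ) + 1/2) := by
      have h1 := Real.sqrt_le_sqrt hkey
      rw [Real.sqrt_mul (sq_nonneg _), Real.sqrt_sq hΓ.le, Real.sqrt_sq hΓh.le] at h1
      exact h1
    calc Real.sqrt ((z:ℝ) - 1/2) / Real.sqrt z
        = Real.Gamma z * Real.sqrt ((z:ℝ) - 1/2) / (Real.Gamma z * Real.sqrt z) := by
          rw [mul_div_mul_left _ _ hΓ.ne']
      _ ≤ Real.Gamma ((z:ℝ) + 1/2) / (Real.Gamma z * Real.sqrt z) := by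
          gcongr
  · -- upper bound: Γ(z+1/2)/(Γ(z)√z) ≤ 1
    filter_upwards [eventually_ge_atTop 1] with z hz
    have hz1 : (1 : ℝ) ≤ (z : ℝ) := by exact_mod_cast hz
    have hzpos : (0 : ℝ) < z := by linarith
    have hΓ : 0 < Real.Gamma z := Real.Gamma_pos_of_pos hzpos
    have hsz : 0 < Real.sqrt z := Real.sqrt_pos.2 hzpos
    rw [div_le_one (by positivity)]
    have hlc := Real.Gamma_mul_add_mul_le_rpow_Gamma_mul_rpow_Gamma
      hzpos (show 0 < (z:ℝ) + 1 by linarith)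
      (show (0:ℝ) < 1/2 by norm_num) (show (0:ℝ) < 1/2 by norm_num) (by norm_num)
    rw [show (1/2 : ℝ) * (z:ℝ) + (1/2 : ℝ) * ((z:ℝ) + 1) = (z : ℝ) + 1/2 by ring,
      ← Real.sqrt_eq_rpow, ← Real.sqrt_eq_rpow, Real.Gamma_add_one hzpos.ne',
      ← Real.sqrt_mul hΓ.le,
      show Real.Gamma z * ((z:ℝ) * Real.Gamma z) = Real.Gamma z ^ 2 * z by ring,
      Real.sqrt_mul (sq_nonneg _), Real.sqrt_sq hΓ.le] at hlc
    exact hlc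

/-- Two-sided bounds for the incomplete beta integral. -/
lemma aux_int_bounds {s : ℝ} (hs0 : 0 < s) (hs1 : s < 1) (z : ℕ) (hz : 1 ≤ z) :
    (1 / Real.sqrt (1-s)) * (s ^ z / z)
        - (1 / (2 * ((1-s) * Real.sqrt (1-s)))) * (s ^ (z+1) / ((z:ℝ) * ((z:ℝ)+1)))
      ≤ (∫ t in (0:ℝ)..s, t ^ (z - 1 : ℕ) * (1 - t) ^ (-(1/2) : ℝ)) ∧
    (∫ t in (0:ℝ)..s, t ^ (z - 1 : ℕ) * (1 - t) ^ (-(1/2) : ℝ))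
      ≤ s ^ z / z * (1 / Real.sqrt (1-s)) := by
  have h1s : (0:ℝ) < 1 - s := by linarith
  have hsq : 0 < Real.sqrt (1 - s) := Real.sqrt_pos.2 h1s
  set gs : ℝ := 1 / Real.sqrt (1 - s) with hgs
  set C : ℝ := 1 / (2 * ((1 - s) * Real.sqrt (1 - s))) with hC
  have hz1 : (1 : ℝ) ≤ (z : ℝ) := by exact_mod_cast hz
  have hzpos : (0 : ℝ) < z := by linarith
  set m : ℕ := z - 1 with hm
  have hzm : z = m + 1 := by omega
  have hcont : ContinuousOn (fun t : ℝ => t ^ m * (1 - t) ^ (-(1/2) : ℝ))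
      (Set.uIcc (0:ℝ) s) := by
    rw [Set.uIcc_of_le hs0.le]
    refine (continuousOn_pow m).mul (ContinuousOn.rpow_const ?_ ?_)
    · exact (continuous_const.sub continuous_id).continuousOn
    · intro t ht
      left
      intro h
      have ht1 : t = 1 := by linarith [sub_eq_zero.mp h]
      linarith [ht.2]
  have hI : IntervalIntegrable (fun t : ℝ => t ^ m * (1 - t) ^ (-(1/2) : ℝ))
      MeasureTheory.volume 0 s := hcont.intervalIntegrable
  have hptle : ∀ t ∈ Set.Icc (0:ℝ) s, gs - C * (s - t) ≤ (1 - t) ^ (-(1/2) : ℝ) ∧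
      (1 - t) ^ (-(1/2) : ℝ) ≤ gs := by
    intro t ht
    have h1t : (0:ℝ) < 1 - t := by linarith [ht.2]
    have hrw : (1 - t) ^ (-(1/2) : ℝ) = 1 / Real.sqrt (1 - t) := by
      rw [Real.rpow_neg h1t.le, Real.sqrt_eq_rpow]
      exact (one_div _).symm
    rw [hrw]
    have hstx : Real.sqrt (1 - s) ≤ Real.sqrt (1 - t) := Real.sqrt_le_sqrt (by linarith [ht.2])
    constructor
    · have hkey := aux_inv_sub_le hsq (x := Real.sqrt (1 - t)) hstx
      rw [Real.sq_sqrt h1t.le, Real.sq_sqrt h1s.le] at hkey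
      have harith : ((1 - t) - (1 - s)) / (2 * ((1 - s) * Real.sqrt (1 - s)))
          = C * (s - t) := by
        rw [hC]; field_simp; ring
      have h2 : 1 / Real.sqrt (1 - s) - 1 / Real.sqrt (1 - t) ≤ C * (s - t) :=
        hkey.trans (le_of_eq harith)
      rw [hgs]
      linarith
    · rw [hgs]
      exact one_div_le_one_div_of_le hsq hstx
  constructor
  · -- lower bound
    have hfeq : (fun t : ℝ => t ^ m * (gs - C * (s - t)))
        = fun t : ℝ => (t ^ m * gs - (C * s) * t ^ m) + C * t ^ (m+1) := by
      funext t; ring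
    have e1 : IntervalIntegrable (fun t:ℝ => t ^ m * gs) MeasureTheory.volume 0 s :=
      ((continuous_pow m).mul continuous_const).intervalIntegrable 0 s
    have e2 : IntervalIntegrable (fun t:ℝ => (C * s) * t ^ m) MeasureTheory.volume 0 s :=
      (continuous_const.mul (continuous_pow m)).intervalIntegrable 0 s
    have e3 : IntervalIntegrable (fun t:ℝ => C * t ^ (m+1)) MeasureTheory.volume 0 s :=
      (continuous_const.mul (continuous_pow (m+1))).intervalIntegrable 0 s
    have hmono := intervalIntegral.integral_mono_on hs0.le
      (((continuous_pow m).mul (continuous_const.sub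
        (continuous_const.mul (continuous_const.sub continuous_id)))).intervalIntegrable 0 s)
      hI
      (fun t ht => by
        have h0t : (0:ℝ) ≤ t := ht.1
        exact mul_le_mul_of_nonneg_left ((hptle t ht).1) (pow_nonneg h0t m))
    have hcomp : (∫ t in (0:ℝ)..s, t ^ m * (gs - C * (s - t)))
        = gs * (s ^ z / z) - C * (s ^ (z+1) / ((z:ℝ) * ((z:ℝ)+1))) := by
      rw [hfeq, intervalIntegral.integral_add (e1.sub e2) e3,
        intervalIntegral.integral_sub e1 e2,
        intervalIntegral.integral_mul_const, intervalIntegral.integral_const_mul,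
        intervalIntegral.integral_const_mul, integral_pow, integral_pow]
      rw [hzm]
      push_cast
      have hm1 : ((m:ℝ)) + 1 ≠ 0 := by positivity
      have hm2 : ((m:ℝ)) + 1 + 1 ≠ 0 := by positivity
      rw [zero_pow (by omega), zero_pow (by omega)]
      field_simp
      ring
    calc gs * (s ^ z / z) - C * (s ^ (z+1) / ((z:ℝ) * ((z:ℝ)+1)))
        = ∫ t in (0:ℝ)..s, t ^ m * (gs - C * (s - t)) := hcomp.symm
      _ ≤ _ := hmono
  · -- upper bound
    have hmono := intervalIntegral.integral_mono_on hs0.le hI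
      (((continuous_pow m).mul continuous_const).intervalIntegrable 0 s)
      (fun t ht => by
        have h0t : (0:ℝ) ≤ t := ht.1
        exact mul_le_mul_of_nonneg_left ((hptle t ht).2) (pow_nonneg h0t m))
    simp only [Pi.mul_apply] at hmono
    rw [intervalIntegral.integral_mul_const, integral_pow] at hmono
    calc (∫ t in (0:ℝ)..s, t ^ m * (1 - t) ^ (-(1/2) : ℝ))
        ≤ (s ^ (m + 1) - 0 ^ (m + 1)) / ((m:ℝ) + 1) * gs := hmono
      _ = s ^ z / z * gs := by
          rw [hzm]
          push_cast
          rw [zero_pow (by omega)]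
          ring
/-- Laplace-type asymptotics for the incomplete beta integral. -/
lemma aux_integral_asymp {s : ℝ} (hs0 : 0 < s) (hs1 : s < 1) :
    Tendsto (fun z : ℕ =>
        (z : ℝ) * (∫ t in (0:ℝ)..s, t ^ (z - 1 : ℕ) * (1 - t) ^ (-(1/2) : ℝ)) / s ^ z)
      atTop (𝓝 (1 / Real.sqrt (1 - s))) := by
  have h1s : (0:ℝ) < 1 - s := by linarith
  have hsq : 0 < Real.sqrt (1 - s) := Real.sqrt_pos.2 h1s
  set gs : ℝ := 1 / Real.sqrt (1 - s) with hgs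
  set C : ℝ := 1 / (2 * ((1 - s) * Real.sqrt (1 - s))) with hC
  have hCpos : 0 < C := by rw [hC]; positivity
  have hlowt : Tendsto (fun z : ℕ => gs - C * s * (1 / ((z : ℝ) + 1))) atTop (𝓝 gs) := by
    have h0 : Tendsto (fun z : ℕ => C * s * (1 / ((z : ℝ) + 1))) atTop (𝓝 0) := by
      simpa using tendsto_one_div_add_atTop_nhds_zero_nat.const_mul (C * s)
    have h1 := h0.const_sub gs
    simpa using h1
  refine tendsto_of_tendsto_of_tendsto_of_le_of_le' hlowt tendsto_const_nhds ?_ ?_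
  · filter_upwards [eventually_ge_atTop 1] with z hz
    have hz1 : (1 : ℝ) ≤ (z : ℝ) := by exact_mod_cast hz
    have hzpos : (0 : ℝ) < z := by linarith
    have hspow : (0:ℝ) < s ^ z := by positivity
    have hlow := (aux_int_bounds hs0 hs1 z hz).1
    rw [le_div_iff₀ hspow]
    have h2 : (z:ℝ) * (gs * (s ^ z / z) - C * (s ^ (z+1) / ((z:ℝ) * ((z:ℝ)+1))))
        = (gs - C * s * (1 / ((z:ℝ) + 1))) * s ^ z := by
      have hz1' : ((z:ℝ)) + 1 ≠ 0 := by positivity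
      field_simp
      ring
    calc (gs - C * s * (1 / ((z:ℝ) + 1))) * s ^ z
        = (z:ℝ) * (gs * (s ^ z / z) - C * (s ^ (z+1) / ((z:ℝ) * ((z:ℝ)+1)))) := h2.symm
      _ ≤ (z:ℝ) * (∫ t in (0:ℝ)..s, t ^ (z - 1 : ℕ) * (1 - t) ^ (-(1/2) : ℝ)) := by
          exact mul_le_mul_of_nonneg_left hlow hzpos.le
  · filter_upwards [eventually_ge_atTop 1] with z hz
    have hz1 : (1 : ℝ) ≤ (z : ℝ) := by exact_mod_cast hz
    have hzpos : (0 : ℝ) < z := by linarith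
    have hspow : (0:ℝ) < s ^ z := by positivity
    have hup := (aux_int_bounds hs0 hs1 z hz).2
    rw [div_le_iff₀ hspow]
    calc (z:ℝ) * (∫ t in (0:ℝ)..s, t ^ (z - 1 : ℕ) * (1 - t) ^ (-(1/2) : ℝ))
        ≤ (z:ℝ) * (s ^ z / z * gs) := mul_le_mul_of_nonneg_left hup hzpos.le
      _ = gs * s ^ z := by field_simp

/-- Exponential decay of the double spend probability: with `s = 4pq < 1`,
`P(z) = I_s(z, 1/2) ~ s^z / sqrt(π(1-s)z)` as `z → ∞`. -/
theorem double_spend_probability_asymptotics (q : ℝ) (hq0 : 0 < q) (hq1 : q < 1/2)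
    (p : ℝ) (hp : p = 1 - q) (s : ℝ) (hs : s = 4 * p * q) :
    Tendsto (fun z : ℕ =>
        regIncBeta s z (1/2) * Real.sqrt (π * (1 - s) * z) / s ^ z)
      atTop (𝓝 1) := by
  have hs0 : 0 < s := by rw [hs, hp]; nlinarith
  have hs1 : s < 1 := by rw [hs, hp]; nlinarith [sq_nonneg (1 - 2*q)]
  have h1s : (0:ℝ) < 1 - s := by linarith
  have hsq : 0 < Real.sqrt (1 - s) := Real.sqrt_pos.2 h1s
  have hB := (aux_integral_asymp hs0 hs1).mul_const (Real.sqrt (1 - s))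
  have hone : (1 / Real.sqrt (1 - s)) * Real.sqrt (1 - s) = 1 := by field_simp
  rw [hone] at hB
  have hAB := aux_gamma_ratio.mul hB
  rw [mul_one] at hAB
  refine hAB.congr' ?_
  filter_upwards [eventually_ge_atTop 1] with z hz
  have hz1 : (1 : ℝ) ≤ (z : ℝ) := by exact_mod_cast hz
  have hzpos : (0 : ℝ) < z := by linarith
  have hΓ : 0 < Real.Gamma z := Real.Gamma_pos_of_pos hzpos
  have hsz : 0 < Real.sqrt z := Real.sqrt_pos.2 hzpos
  have hspow : (0:ℝ) < s ^ z := by positivity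
  have hπ : 0 < Real.sqrt π := Real.sqrt_pos.2 Real.pi_pos
  -- rewrite the rpow integrand as the natural-power one
  have hint : (∫ t in (0:ℝ)..s, t ^ ((z:ℝ) - 1) * (1 - t) ^ ((1/2 : ℝ) - 1))
      = ∫ t in (0:ℝ)..s, t ^ (z - 1 : ℕ) * (1 - t) ^ (-(1/2) : ℝ) := by
    have hc : ((z - 1 : ℕ) : ℝ) = (z:ℝ) - 1 := by
      have := Nat.cast_sub hz (R := ℝ)
      simpa using this
    congr 1
    funext t
    rw [← hc, Real.rpow_natCast, show ((1/2 : ℝ) - 1) = -(1/2 : ℝ) by norm_num]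
  have hsqrt : Real.sqrt (π * (1 - s) * z)
      = Real.sqrt π * Real.sqrt (1 - s) * Real.sqrt z := by
    rw [Real.sqrt_mul (by positivity), Real.sqrt_mul Real.pi_pos.le]
  have hzz : Real.sqrt (z:ℝ) * Real.sqrt (z:ℝ) = (z:ℝ) := Real.mul_self_sqrt hzpos.le
  show Real.Gamma ((z:ℝ) + 1/2) / (Real.Gamma z * Real.sqrt z) *
      ((z:ℝ) * (∫ t in (0:ℝ)..s, t ^ (z - 1 : ℕ) * (1 - t) ^ (-(1/2) : ℝ)) / s ^ z *
        Real.sqrt (1 - s))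
    = regIncBeta s z (1/2) * Real.sqrt (π * (1 - s) * z) / s ^ z
  rw [regIncBeta, hint, Real.Gamma_one_half_eq, hsqrt]
  set G := Real.Gamma ((z:ℝ) + 1/2) with hG
  set I := ∫ t in (0:ℝ)..s, t ^ (z - 1 : ℕ) * (1 - t) ^ (-(1/2) : ℝ) with hIdef
  set Gz := Real.Gamma (z:ℝ) with hGz
  field_simp
  linear_combination (-(G * I)) * hzz
end

section
/- The Catalan distribution of the second type, defined by P[X = 0] = p and P[X = n] = C_{n-1} (pq)^n for n ≥ 1, is a probability distribution: p + ∑_{n≥1} C_{n-1}(pq)^n = 1 for 0 < q < 1/2, p = 1 - q. -/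
/-- The Catalan distribution of the second type, `P[X = 0] = p` and
`P[X = n] = C_{n-1} (pq)^n` for `n ≥ 1`, is a probability distribution:
`p + ∑_{n≥1} C_{n-1} (pq)^n = 1`. -/
theorem catalan_distribution_second_type (q : ℝ) (hq0 : 0 < q) (hq1 : q < 1/2)
    (p : ℝ) (hp : p = 1 - q) :
    p + ∑' n : ℕ, (catalan n : ℝ) * (p * q) ^ (n + 1) = 1 := by
  set x : ℝ := p * q with hx
  have hp2 : (1:ℝ)/2 < p := by rw [hp]; linarith
  have hx0 : 0 < x := by rw [hx, hp]; nlinarith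
  have hx4 : 4 * x < 1 := by rw [hx, hp]; nlinarith [sq_nonneg (1 - 2*q)]
  set f : ℕ → ℝ := fun n => (catalan n : ℝ) * x ^ (n + 1) with hf
  have hfnn : ∀ n, 0 ≤ f n := fun n => by positivity
  have hcat : ∀ n, (catalan n : ℝ) ≤ 4 ^ n := by
    intro n
    have h1 : catalan n ≤ 4 ^ n := by
      calc catalan n ≤ n.centralBinom := Nat.le_of_dvd n.centralBinom_pos
            ⟨n + 1, (succ_mul_catalan_eq_centralBinom n).symm ▸ (Nat.mul_comm _ _)⟩
        _ ≤ (2 * n + 1).choose n := Nat.choose_le_choose n (by omega)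
        _ ≤ 4 ^ n := Nat.choose_middle_le_pow n
    exact_mod_cast h1
  have hfle : ∀ n, f n ≤ (4 * x) ^ n * x := by
    intro n
    have h1 : (catalan n : ℝ) * x ^ n ≤ 4 ^ n * x ^ n :=
      mul_le_mul_of_nonneg_right (hcat n) (by positivity)
    calc f n = (catalan n : ℝ) * x ^ n * x := by rw [hf]; ring
      _ ≤ 4 ^ n * x ^ n * x := mul_le_mul_of_nonneg_right h1 hx0.le
      _ = (4 * x) ^ n * x := by rw [mul_pow 4 x n]
  have hsum : Summable f := by
    apply Summable.of_nonneg_of_le hfnn hfle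
    exact (summable_geometric_of_lt_one (by positivity) (by linarith)).mul_right x
  set S : ℝ := ∑' n, f n with hS
  -- f (n+1) = ∑ over antidiagonal n of f i * f j
  have hkey : ∀ n : ℕ, ∑ ij ∈ Finset.HasAntidiagonal.antidiagonal n, f ij.1 * f ij.2 = f (n + 1) := by
    intro n
    have : ∀ ij ∈ Finset.HasAntidiagonal.antidiagonal n, f ij.1 * f ij.2
        = ((catalan ij.1 * catalan ij.2 : ℕ) : ℝ) * x ^ (n + 2) := by
      rintro ⟨i, j⟩ hij
      rw [Finset.HasAntidiagonal.mem_antidiagonal] at hij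
      simp only [hf]
      push_cast
      rw [← hij]
      ring
    rw [Finset.sum_congr rfl this, ← Finset.sum_mul, ← Nat.cast_sum, ← catalan_succ']
  -- S = x + S^2
  have hSeq : S = x + S ^ 2 := by
    have hnorm : Summable fun n => ‖f n‖ := by
      simpa [Real.norm_of_nonneg (hfnn _)] using hsum
    have h2 : S * S = ∑' n, ∑ ij ∈ Finset.HasAntidiagonal.antidiagonal n, f ij.1 * f ij.2 :=
      tsum_mul_tsum_eq_tsum_sum_antidiagonal_of_summable_norm hnorm hnorm
    have h3 : S * S = ∑' n, f (n + 1) := by rw [h2]; exact tsum_congr hkey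
    have h4 : S = f 0 + ∑' n, f (n + 1) := Summable.tsum_eq_zero_add hsum
    have hf0 : f 0 = x := by simp [hf]
    rw [sq, h3, h4, hf0]
  -- S ≤ q
  have hSq : S ≤ q := by
    have hqx : q = x + q ^ 2 := by rw [hx, hp]; ring
    have hpart : ∀ N : ℕ, ∑ n ∈ Finset.range N, f n ≤ q := by
      intro N
      induction N with
      | zero => simpa using hq0.le
      | succ N ih =>
        rw [Finset.sum_range_succ']
        have hbi : ∑ n ∈ Finset.range N, f (n + 1)
            ≤ (∑ n ∈ Finset.range N, f n) ^ 2 := by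
          have hdisj : (Finset.range N : Set ℕ).PairwiseDisjoint
              (fun n => Finset.HasAntidiagonal.antidiagonal n) := by
            intro a _ b _ hab
            simp only [Finset.disjoint_left]
            rintro ⟨i, j⟩ hi hj
            rw [Finset.HasAntidiagonal.mem_antidiagonal] at hi hj
            omega
          calc ∑ n ∈ Finset.range N, f (n + 1)
              = ∑ ij ∈ (Finset.range N).biUnion (fun n => Finset.HasAntidiagonal.antidiagonal n),
                  f ij.1 * f ij.2 := by
                rw [Finset.sum_biUnion hdisj]
                exact (Finset.sum_congr rfl fun n _ => hkey n).symm
            _ ≤ ∑ ij ∈ Finset.range N ×ˢ Finset.range N, f ij.1 * f ij.2 := by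
                apply Finset.sum_le_sum_of_subset_of_nonneg
                · intro ij hij
                  simp only [Finset.mem_biUnion] at hij
                  obtain ⟨n, hn, hij⟩ := hij
                  rw [Finset.HasAntidiagonal.mem_antidiagonal] at hij
                  rw [Finset.mem_range] at hn
                  simp only [Finset.mem_product, Finset.mem_range]
                  omega
                · intro ij _ _
                  exact mul_nonneg (hfnn _) (hfnn _)
            _ = (∑ n ∈ Finset.range N, f n) ^ 2 := by
                rw [sq, Finset.sum_mul_sum]
                rw [Finset.sum_product]
        have hf0 : f 0 = x := by simp [hf]
        have hsq : (∑ n ∈ Finset.range N, f n) ^ 2 ≤ q ^ 2 := by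
          have h0 : 0 ≤ ∑ n ∈ Finset.range N, f n := Finset.sum_nonneg fun n _ => hfnn n
          nlinarith
        rw [hf0]
        linarith [hqx]
    apply Summable.tsum_le_of_sum_le hsum
    intro s
    rcases s.exists_nat_subset_range with ⟨N, hN⟩
    calc ∑ n ∈ s, f n ≤ ∑ n ∈ Finset.range N, f n :=
          Finset.sum_le_sum_of_subset_of_nonneg hN fun n _ _ => hfnn n
      _ ≤ q := hpart N
  -- conclude S = q
  have hroot : (S - q) * (S - p) = 0 := by
    have : q * p = x := by rw [hx]; ring
    nlinarith [hSeq]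
  have hSp : S - p ≠ 0 := by
    have : S < p := lt_of_le_of_lt hSq (by linarith)
    linarith
  have hSq' : S = q := by
    rcases mul_eq_zero.mp hroot with h | h
    · linarith
    · exact absurd h hSp
  rw [hSq', hp]; ring
end

section
/- The Catalan distribution of the third type, defined by P[X = 0] = p, P[X = 1] = pq + pq², and P[X = n] = pq² C_{n-1} (pq)^{n-1} for n ≥ 2, is a probability distribution (the masses sum to 1) for 0 < q < 1/2, p = 1 - q. -/
open Finset

lemma catalan_le_four_pow (n : ℕ) : catalan n ≤ 4 ^ n := by
  have h1 : catalan n ≤ (n + 1) * catalan n := Nat.le_mul_of_pos_left _ (Nat.succ_pos n)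
  have h2 : (n + 1) * catalan n = Nat.centralBinom n := succ_mul_catalan_eq_centralBinom n
  have h3 : Nat.centralBinom n ≤ (2 * n + 1).choose n := by
    rw [Nat.centralBinom_eq_two_mul_choose]
    exact Nat.choose_le_choose n (Nat.le_succ _)
  calc catalan n ≤ Nat.centralBinom n := h2 ▸ h1
    _ ≤ (2 * n + 1).choose n := h3
    _ ≤ 4 ^ n := Nat.choose_middle_le_pow n

lemma cauchy_finite_le (g : ℕ → ℝ) (hg : ∀ n, 0 ≤ g n) (N : ℕ) :
    ∑ n ∈ range N, ∑ ij ∈ Finset.HasAntidiagonal.antidiagonal n, g ij.1 * g ij.2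
      ≤ (∑ n ∈ range N, g n) ^ 2 := by
  have key : ∑ n ∈ range N, ∑ ij ∈ Finset.HasAntidiagonal.antidiagonal n, g ij.1 * g ij.2
      = ∑ ij ∈ (range N ×ˢ range N).filter (fun ij => ij.1 + ij.2 < N),
          g ij.1 * g ij.2 := by
    rw [← Finset.sum_biUnion]
    · congr 1
      ext ⟨a, b⟩
      simp only [Finset.mem_biUnion, Finset.mem_range, Finset.HasAntidiagonal.mem_antidiagonal,
        Finset.mem_filter, Finset.mem_product]
      constructor
      · rintro ⟨n, hn, h⟩; omega
      · intro h; exact ⟨a + b, by omega, rfl⟩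
    · intro i _ j _ hij
      simp only [Finset.disjoint_left, Finset.HasAntidiagonal.mem_antidiagonal]
      rintro ⟨a, b⟩ h1 h2
      exact hij (h1.symm.trans h2)
  rw [key, sq, Finset.sum_mul_sum]
  rw [← Finset.sum_product']
  exact Finset.sum_le_sum_of_subset_of_nonneg (Finset.filter_subset _ _)
    (fun ij _ _ => mul_nonneg (hg _) (hg _))

/-- The Catalan distribution of the third type, `P[X = 0] = p`, `P[X = 1] = pq + pq²`,
and `P[X = n] = pq² C_{n-1} (pq)^{n-1}` for `n ≥ 2`, is a probability distribution. -/
theorem catalan_distribution_third_type (q : ℝ) (hq0 : 0 < q) (hq1 : q < 1/2)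
    (p : ℝ) (hp : p = 1 - q) :
    p + (p * q + p * q ^ 2)
      + ∑' n : ℕ, p * q ^ 2 * (catalan (n + 1) : ℝ) * (p * q) ^ (n + 1) = 1 := by
  have hp0 : 0 < p := by rw [hp]; linarith
  have hpq : p + q = 1 := by rw [hp]; ring
  set x : ℝ := p * q with hx
  have hx0 : 0 < x := mul_pos hp0 hq0
  have hx4 : 4 * x < 1 := by
    have h2q : 0 < 1 - 2 * q := by linarith
    nlinarith [mul_pos h2q h2q]
  set g : ℕ → ℝ := fun n => (catalan n : ℝ) * x ^ n with hgdef
  have hg0 : ∀ n, 0 ≤ g n := fun n => by positivity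
  have hgle : ∀ n, g n ≤ (4 * x) ^ n := by
    intro n
    have : (catalan n : ℝ) ≤ 4 ^ n := by exact_mod_cast catalan_le_four_pow n
    calc g n ≤ 4 ^ n * x ^ n := by
          exact mul_le_mul_of_nonneg_right this (by positivity)
      _ = (4 * x) ^ n := (mul_pow 4 x n).symm
  have hsum : Summable g := by
    apply Summable.of_nonneg_of_le hg0 hgle
    exact summable_geometric_of_lt_one (by positivity) hx4
  -- the recurrence term
  have hgsucc : ∀ n : ℕ, g (n + 1) = x * ∑ ij ∈ Finset.HasAntidiagonal.antidiagonal n, g ij.1 * g ij.2 := by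
    intro n
    simp only [hgdef, catalan_succ']
    push_cast
    rw [Finset.sum_mul, Finset.mul_sum]
    refine Finset.sum_congr rfl fun ij hij => ?_
    have h : ij.1 + ij.2 = n := Finset.HasAntidiagonal.mem_antidiagonal.mp hij
    rw [show n + 1 = ij.1 + ij.2 + 1 by omega, pow_succ, pow_add]
    ring
  set r : ℝ := 1 / p with hr
  have hr0 : 0 < r := by positivity
  have hrfix : 1 + x * r ^ 2 = r := by
    rw [hr]
    field_simp
    nlinarith [hpq]
  -- partial sums bounded by r
  have hpart : ∀ N, ∑ n ∈ range N, g n ≤ r := by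
    intro N
    induction N with
    | zero => simpa using hr0.le
    | succ N ih =>
      rw [Finset.sum_range_succ']
      have h1 : ∑ i ∈ range N, g (i + 1)
          = x * ∑ n ∈ range N, ∑ ij ∈ Finset.HasAntidiagonal.antidiagonal n, g ij.1 * g ij.2 := by
        rw [Finset.mul_sum]
        exact Finset.sum_congr rfl fun n _ => hgsucc n
      have h2 : ∑ n ∈ range N, ∑ ij ∈ Finset.HasAntidiagonal.antidiagonal n, g ij.1 * g ij.2
          ≤ (∑ n ∈ range N, g n) ^ 2 := cauchy_finite_le g hg0 N
      have h3 : (∑ n ∈ range N, g n) ^ 2 ≤ r ^ 2 := by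
        have hnn : 0 ≤ ∑ n ∈ range N, g n := Finset.sum_nonneg fun n _ => hg0 n
        exact pow_le_pow_left₀ hnn ih 2
      have hg00 : g 0 = 1 := by simp [hgdef]
      calc ∑ i ∈ range N, g (i + 1) + g 0
          = 1 + x * ∑ n ∈ range N, ∑ ij ∈ Finset.HasAntidiagonal.antidiagonal n, g ij.1 * g ij.2 := by
            rw [hg00, h1]; ring
        _ ≤ 1 + x * r ^ 2 := by
            have := le_trans h2 h3
            nlinarith [hx0]
        _ = r := hrfix
  set f : ℝ := ∑' n, g n with hf
  have hfle : f ≤ r := Summable.tsum_le_of_sum_range_le hsum hpart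
  have hf0 : 0 ≤ f := tsum_nonneg hg0
  -- Cauchy product: f = 1 + x * f^2
  have hnorm : Summable fun n => ‖g n‖ := by
    simpa [Real.norm_of_nonneg (hg0 _)] using hsum
  have hcauchy : f * f = ∑' n, ∑ ij ∈ Finset.HasAntidiagonal.antidiagonal n, g ij.1 * g ij.2 :=
    tsum_mul_tsum_eq_tsum_sum_antidiagonal_of_summable_norm hnorm hnorm
  have hsum_anti : Summable fun n => ∑ ij ∈ Finset.HasAntidiagonal.antidiagonal n, g ij.1 * g ij.2 :=
    summable_sum_mul_antidiagonal_of_summable_mul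
      (summable_mul_of_summable_norm hnorm hnorm)
  have hfeq : f = 1 + x * f ^ 2 := by
    have h0 : f = g 0 + ∑' n, g (n + 1) := Summable.tsum_eq_zero_add hsum
    have h1 : ∑' n, g (n + 1)
        = x * ∑' n, ∑ ij ∈ Finset.HasAntidiagonal.antidiagonal n, g ij.1 * g ij.2 := by
      rw [← tsum_mul_left]
      exact tsum_congr hgsucc
    have hg00 : g 0 = 1 := by simp [hgdef]
    calc f = 1 + ∑' n, g (n + 1) := by rw [hg00] at h0; linarith
      _ = 1 + x * ∑' n, ∑ ij ∈ Finset.HasAntidiagonal.antidiagonal n, g ij.1 * g ij.2 := by rw [h1]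
      _ = 1 + x * (f * f) := by rw [← hcauchy]
      _ = 1 + x * f ^ 2 := by ring
  -- solve: f = 1/p
  have hxf : x * f ^ 2 - f + 1 = 0 := by linarith [hfeq]
  have hfactor : (p * f - 1) * (q * f - 1) = 0 := by
    calc (p * f - 1) * (q * f - 1) = p * q * f ^ 2 - (p + q) * f + 1 := by ring
      _ = x * f ^ 2 - f + 1 := by rw [hpq, hx]; ring
      _ = 0 := hxf
  have hq_ne : q * f - 1 < 0 := by
    have h2q : q < p := by rw [hp]; linarith
    have h1 : q * f ≤ q * (1 / p) := mul_le_mul_of_nonneg_left hfle hq0.le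
    have h2 : q * (1 / p) < 1 := by
      rw [mul_one_div]
      exact (div_lt_one hp0).mpr h2q
    linarith
  have hpf : p * f = 1 := by
    rcases mul_eq_zero.mp hfactor with h | h
    · linarith
    · linarith
  have hfval : f = 1 / p := by field_simp at hpf ⊢; linarith
  -- compute the tsum in the statement
  have htail : ∑' n : ℕ, g (n + 1) = f - 1 := by
    have h0 : f = g 0 + ∑' n, g (n + 1) := Summable.tsum_eq_zero_add hsum
    have hg00 : g 0 = 1 := by simp [hgdef]
    rw [hg00] at h0
    linarith
  have hmain : ∑' n : ℕ, p * q ^ 2 * (catalan (n + 1) : ℝ) * (p * q) ^ (n + 1)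
      = p * q ^ 2 * (f - 1) := by
    rw [← htail, ← tsum_mul_left]
    apply tsum_congr
    intro n
    rw [hgdef]
    ring
  rw [hmain, hfval]
  field_simp
  nlinarith [hpq]
end

section
/- In the selfish mining strategy with relative hashrates q (attacker) and p = 1 - q, connectivity parameter γ ∈ [0,1], the long-term apparent hashrate of the selfish miner is q' = [((1 + pq)(p - q) + pq)q - (1 - γ)p²q(p - q)] / (p²q + p - q), computed as q' = E[π']/(E[π] + E[π']) for the stationary distribution of the associated Markov chain. -/
/-- Transition matrix of the Eyal–Sirer selfish mining Markov chain.
States: `0` = state "0", `1` = state "0'" (competition), `k + 1` = lead `k` for `k ≥ 1`. -/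
noncomputable def esTransition (p q : ℝ) (i j : ℕ) : ℝ :=
  if i = 0 then (if j = 0 then p else if j = 2 then q else 0)
  else if i = 1 then (if j = 0 then 1 else 0)
  else if i = 2 then (if j = 1 then p else if j = 3 then q else 0)
  else if i = 3 then (if j = 0 then p else if j = 4 then q else 0)
  else (if j = i - 1 then p else if j = i + 1 then q else 0)

/-- Expected reward of the honest miners on a transition out of state `i`. -/
noncomputable def esHonestReward (p q γ : ℝ) (i : ℕ) : ℝ :=
  if i = 0 then p else if i = 1 then γ * p + 2 * (1 - γ) * p else 0

/-- Expected reward of the selfish miner on a transition out of state `i`. -/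
noncomputable def esSelfishReward (p q γ : ℝ) (i : ℕ) : ℝ :=
  if i = 1 then 2 * q + γ * p else if i = 3 then 2 * p else if 4 ≤ i then p else 0

open Filter Topology in
set_option maxHeartbeats 1000000 in
/-- Eyal–Sirer: the long-term apparent hashrate of the selfish miner, computed as
`q' = E[π']/(E[π] + E[π'])` for the stationary distribution `μ` of the selfish mining
Markov chain, equals
`[((1 + pq)(p - q) + pq)q - (1 - γ)p²q(p - q)] / (p²q + p - q)`. -/
theorem selfish_mining_apparent_hashrate (q : ℝ) (hq0 : 0 < q) (hq1 : q < 1/2)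
    (p : ℝ) (hp : p = 1 - q) (γ : ℝ) (hγ0 : 0 ≤ γ) (hγ1 : γ ≤ 1)
    (μ : ℕ → ℝ) (hμpos : ∀ i, 0 ≤ μ i) (hμsum : Summable μ) (hμ1 : ∑' i, μ i = 1)
    (hstat : ∀ j, μ j = ∑' i, μ i * esTransition p q i j) :
    (∑' i, μ i * esSelfishReward p q γ i)
      / ((∑' i, μ i * esHonestReward p q γ i) + ∑' i, μ i * esSelfishReward p q γ i)
    = (((1 + p * q) * (p - q) + p * q) * q - (1 - γ) * p ^ 2 * q * (p - q))
        / (p ^ 2 * q + p - q) := by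
  have hp0 : (0:ℝ) < p := by rw [hp]; linarith
  have hqp : q < p := by rw [hp]; linarith
  have hpq : (0:ℝ) < p - q := by linarith
  set r : ℝ := q / p with hr
  have hr0 : (0:ℝ) ≤ r := le_of_lt (div_pos hq0 hp0)
  have hr1 : r < 1 := (div_lt_one hp0).2 hqp
  have key : ∀ (j : ℕ) (s : Finset ℕ), (∀ i ∉ s, μ i * esTransition p q i j = 0) →
      μ j = ∑ i ∈ s, μ i * esTransition p q i j := by
    intro j s h
    rw [hstat j, tsum_eq_sum h]
  -- basic stationary equations
  have h1 : μ 1 = μ 2 * p := by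
    have h := key 1 {2} (by
      intro i hi
      simp only [Finset.mem_singleton] at hi
      unfold esTransition
      split_ifs <;> first | ring1 | (exfalso; first | exact ‹False› | omega))
    rw [Finset.sum_singleton] at h
    rw [h]
    unfold esTransition
    norm_num
  have h2 : μ 2 = μ 0 * q := by
    have h := key 2 {0} (by
      intro i hi
      simp only [Finset.mem_singleton] at hi
      unfold esTransition
      split_ifs <;> first | ring1 | (exfalso; first | exact ‹False› | omega))
    rw [Finset.sum_singleton] at h
    rw [h]
    unfold esTransition
    norm_num
  have htail : ∀ k : ℕ, μ (k+3) = μ (k+2) * q + μ (k+4) * p := by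
    intro k
    have hT1 : esTransition p q (k+2) (k+3) = q := by
      unfold esTransition; split_ifs <;> first | rfl | (exfalso; first | exact ‹False› | omega)
    have hT2 : esTransition p q (k+4) (k+3) = p := by
      unfold esTransition; split_ifs <;> first | rfl | (exfalso; first | exact ‹False› | omega)
    have h := key (k+3) {k+2, k+4} (by
      intro i hi
      simp only [Finset.mem_insert, Finset.mem_singleton] at hi
      push_neg at hi
      unfold esTransition
      split_ifs <;> first | ring1 | (exfalso; first | exact ‹False› | omega))
    rw [Finset.sum_pair (by omega), hT1, hT2] at h
    exact h
  -- constant shift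
  have hc : ∀ k : ℕ, p * μ (k+3) - q * μ (k+2) = p * μ 3 - q * μ 2 := by
    intro k
    induction k with
    | zero => rfl
    | succ n ih =>
      have h := htail n
      rw [hp] at h ⊢
      rw [hp] at ih
      have : (n + 1) + 3 = n + 4 := by omega
      rw [this]
      have : (n + 1) + 2 = n + 3 := by omega
      rw [this]
      linarith [h, ih]
  set c : ℝ := p * μ 3 - q * μ 2 with hcdef
  set L : ℝ := c / (p - q) with hLdef
  have hgeom : ∀ k : ℕ, μ (k+2) - L = r ^ k * (μ 2 - L) := by
    intro k
    induction k with
    | zero => simp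
    | succ n ih =>
      have h := hc n
      have hpL : (p - q) * L = c := by
        rw [hLdef]; field_simp
      have hstep : μ (n+3) - L = r * (μ (n+2) - L) := by
        rw [hr]
        rw [div_mul_eq_mul_div, eq_div_iff hp0.ne']
        linear_combination h - hpL
      have : (n + 1) + 2 = n + 3 := by omega
      rw [this, hstep, ih, pow_succ]
      ring
  have hlim1 : Tendsto (fun k : ℕ => μ (k+2)) atTop (nhds L) := by
    have h1 : Tendsto (fun k : ℕ => r ^ k * (μ 2 - L) + L) atTop (nhds (0 * (μ 2 - L) + L)) :=
      (((tendsto_pow_atTop_nhds_zero_of_lt_one hr0 hr1).mul_const _).add_const L)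
    rw [zero_mul, zero_add] at h1
    refine h1.congr fun k => ?_
    have := hgeom k
    linarith
  have hlim2 : Tendsto (fun k : ℕ => μ (k+2)) atTop (nhds 0) :=
    hμsum.tendsto_atTop_zero.comp (tendsto_add_atTop_nat 2)
  have hL0 : L = 0 := tendsto_nhds_unique hlim1 hlim2
  have hgeo : ∀ k : ℕ, μ (k+2) = μ 2 * r ^ k := by
    intro k
    have := hgeom k
    rw [hL0] at this
    rw [sub_zero, sub_zero] at this
    rw [this]; ring
  -- sum of the tail of μ
  have hsum2 : ∑' k : ℕ, μ (k+2) = μ 2 * (1 - r)⁻¹ := by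
    calc ∑' k : ℕ, μ (k+2) = ∑' k : ℕ, μ 2 * r ^ k := tsum_congr fun k => hgeo k
    _ = μ 2 * (1 - r)⁻¹ := by rw [tsum_mul_left, tsum_geometric_of_lt_one hr0 hr1]
  have h1r : (0:ℝ) < 1 - r := by linarith
  -- positivity of μ 0
  have hμ0pos : 0 < μ 0 := by
    have hs := Summable.sum_add_tsum_nat_add (f := μ) 2 hμsum
    rw [hμ1] at hs
    simp only [Finset.sum_range_succ, Finset.sum_range_one] at hs
    have hsum2' : ∑' (i : ℕ), μ (i + 2) = μ 2 * (1 - r)⁻¹ := hsum2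
    rw [hsum2'] at hs
    rcases lt_or_eq_of_le (hμpos 0) with h | h
    · exact h
    · exfalso
      rw [h1, h2, ← h] at hs
      simp at hs
  -- honest reward sum
  have hH : ∑' i, μ i * esHonestReward p q γ i
      = μ 0 * p + μ 1 * (γ * p + 2 * (1 - γ) * p) := by
    have h := tsum_eq_sum (L := SummationFilter.unconditional ℕ) (s := ({0, 1} : Finset ℕ)) (f := fun i => μ i * esHonestReward p q γ i)
      (by
        intro i hi
        simp only [Finset.mem_insert, Finset.mem_singleton] at hi
        push_neg at hi
        show μ i * esHonestReward p q γ i = 0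
        unfold esHonestReward
        split_ifs <;> first | ring1 | (exfalso; first | exact ‹False› | omega))
    rw [h, Finset.sum_pair (by omega)]
    unfold esHonestReward
    norm_num
  -- selfish reward sum
  have hSR0 : ∀ i, 0 ≤ esSelfishReward p q γ i := by
    intro i
    unfold esSelfishReward
    have : 0 ≤ γ * p := mul_nonneg hγ0 hp0.le
    split_ifs <;> nlinarith
  have hSR2 : ∀ i, esSelfishReward p q γ i ≤ 2 := by
    intro i
    unfold esSelfishReward
    have : γ * p ≤ 1 * 1 := mul_le_mul (by linarith) (by linarith) hp0.le zero_le_one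
    split_ifs <;> nlinarith
  have hfs : Summable (fun i => μ i * esSelfishReward p q γ i) := by
    apply Summable.of_nonneg_of_le (fun i => mul_nonneg (hμpos i) (hSR0 i))
      (fun i => mul_le_mul_of_nonneg_left (hSR2 i) (hμpos i))
    exact hμsum.mul_right 2
  have hS : ∑' i, μ i * esSelfishReward p q γ i
      = μ 1 * (2 * q + γ * p) + μ 3 * (2 * p) + μ 2 * p * r ^ 2 * (1 - r)⁻¹ := by
    have hs := (Summable.sum_add_tsum_nat_add (f := fun i => μ i * esSelfishReward p q γ i) 4 hfs).symm
    rw [hs]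
    have htailS : ∑' k : ℕ, μ (k + 4) * esSelfishReward p q γ (k + 4)
        = μ 2 * p * r ^ 2 * (1 - r)⁻¹ := by
      have : ∀ k : ℕ, μ (k + 4) * esSelfishReward p q γ (k + 4)
          = (μ 2 * p * r ^ 2) * r ^ k := by
        intro k
        have hval : esSelfishReward p q γ (k + 4) = p := by
          unfold esSelfishReward; split_ifs <;> first | rfl | (exfalso; first | exact ‹False› | omega)
        have hμk : μ (k + 4) = μ 2 * r ^ (k + 2) := hgeo (k + 2)
        rw [hval, hμk, pow_add]
        ring
      calc ∑' k : ℕ, μ (k + 4) * esSelfishReward p q γ (k + 4)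
          = ∑' k : ℕ, (μ 2 * p * r ^ 2) * r ^ k := tsum_congr this
        _ = μ 2 * p * r ^ 2 * (1 - r)⁻¹ := by
            rw [tsum_mul_left, tsum_geometric_of_lt_one hr0 hr1]
    rw [htailS]
    simp only [Finset.sum_range_succ, Finset.sum_range_one]
    unfold esSelfishReward
    norm_num
  -- closed forms for the μ values
  have hμ3 : μ 3 = μ 2 * r := by have := hgeo 1; simpa using this
  -- final computation
  have hinv : (1 - r)⁻¹ = p / (p - q) := by
    rw [hr, show (1:ℝ) - q / p = (p - q) / p by field_simp, inv_div]
  have hA : ∑' i, μ i * esHonestReward p q γ i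
      = μ 0 * (p * (1 + p * q * (2 - γ))) := by
    rw [hH, h1, h2]; ring
  have hB : ∑' i, μ i * esSelfishReward p q γ i
      = μ 0 * (p * q * (2 * q + γ * p) + 2 * q ^ 2 + q ^ 3 / (p - q)) := by
    rw [hS, hinv, h1, h2, hμ3, h2, hr]
    field_simp
  have hApos : 0 < p * (1 + p * q * (2 - γ)) := by
    have h2γ : (0:ℝ) < 2 - γ := by linarith
    have := mul_pos (mul_pos hp0 hq0) h2γ
    have : 0 < 1 + p * q * (2 - γ) := by linarith
    exact mul_pos hp0 this
  have hBpos : 0 ≤ p * q * (2 * q + γ * p) + 2 * q ^ 2 + q ^ 3 / (p - q) := by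
    have t1 : 0 ≤ p * q * (2 * q + γ * p) := by
      apply mul_nonneg (by positivity)
      have : 0 ≤ γ * p := mul_nonneg hγ0 hp0.le
      linarith
    have t2 : 0 ≤ q ^ 3 / (p - q) := div_nonneg (by positivity) hpq.le
    nlinarith
  have hden2 : p ^ 2 * q + p - q ≠ 0 := by nlinarith [mul_pos (mul_pos hp0 hp0) hq0]
  rw [hA, hB, ← mul_add, mul_div_mul_left _ _ hμ0pos.ne']
  rw [div_eq_div_iff (by positivity) hden2]
  rw [hp]
  have hne1 : (1:ℝ) - q ≠ 0 := by linarith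
  have hne2 : (1:ℝ) - q - q ≠ 0 := by linarith
  field_simp
  ring
end
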